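/- Let G(ξ) = (1/4π)e^{−|ξ|²/4}, v^G(ξ) = (1/2π) ξ^⊥/|ξ|² (1 − e^{−|ξ|²/4}), and for sufficiently regular w̃ with G^{−1/2} w̃ ∈ L², define Λw̃ = v^G·∇w̃ + (K_{BS} ⋆ w̃)·∇G. Then ∫_{ℝ²} G^{−1} w̃ (Λ w̃) = 0; in other words Λ is skew-symmetric on the weighted space L²_w(ℝ²) with inner product ⟨f,g⟩ = ∫ G^{−1} f g. -/

import Mathlib

open Real MeasureTheory
open scoped ENNReal RealInnerProductSpace

noncomputable section

abbrev E2 := EuclideanSpace ℝ (Fin 2)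

def perp (x : E2) : E2 := (EuclideanSpace.equiv (Fin 2) ℝ).symm ![-(x 1), x 0]

example (a b : ℝ) : ((EuclideanSpace.equiv (Fin 2) ℝ).symm ![a,b]) 0 = a := rfl

lemma perp_apply_zero (x : E2) : perp x 0 = -(x 1) := rfl
lemma perp_apply_one (x : E2) : perp x 1 = x 0 := rfl

lemma inner_eq (x y : E2) : ⟪x, y⟫ = x 0 * y 0 + x 1 * y 1 := by
  simp [PiLp.inner_apply, Fin.sum_univ_two, RCLike.inner_apply]
  ring

lemma inner_perp_self (x : E2) : ⟪perp x, x⟫ = 0 := by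
  simp [inner_eq, perp_apply_zero, perp_apply_one]; ring

lemma norm_sq_eq (x : E2) : ‖x‖ ^ 2 = x 0 ^ 2 + x 1 ^ 2 := by
  rw [← real_inner_self_eq_norm_sq, inner_eq]; ring

lemma norm_perp (x : E2) : ‖perp x‖ = ‖x‖ := by
  have h1 : ‖perp x‖ ^ 2 = ‖x‖ ^ 2 := by
    rw [norm_sq_eq, norm_sq_eq, perp_apply_zero, perp_apply_one]; ring
  have := sq_abs ‖perp x‖
  nlinarith [norm_nonneg x, norm_nonneg (perp x)]

def perpL : E2 →ₗ[ℝ] E2 where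
  toFun := perp
  map_add' x y := by
    apply PiLp.ext
    intro i
    fin_cases i <;> simp [perp_apply_zero, perp_apply_one] <;> ring
  map_smul' c x := by
    apply PiLp.ext
    intro i
    fin_cases i <;> simp [perp_apply_zero, perp_apply_one] <;> ring

lemma continuous_perp : Continuous perp := perpL.continuous_of_finiteDimensional

lemma perp_neg (x : E2) : perp (-x) = - perp x := by
  exact perpL.map_neg x

lemma perp_sub (x y : E2) : perp (x - y) = perp x - perp y := by
  exact perpL.map_sub x y

/-- The Gaussian `G(ξ) = (1/4π) e^{−|ξ|²/4}`. -/
def Gg (ξ : E2) : ℝ := (1 / (4 * π)) * Real.exp (-‖ξ‖ ^ 2 / 4)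

/-- The Oseen velocity profile `v^G(ξ) = (1/2π) ξ^⊥/|ξ|² (1 − e^{−|ξ|²/4})`. -/
def vG (ξ : E2) : E2 :=
  ((2 * π * ‖ξ‖ ^ 2)⁻¹ * (1 - Real.exp (-‖ξ‖ ^ 2 / 4))) • perp ξ

lemma Gg_pos (ξ : E2) : 0 < Gg ξ := by
  apply mul_pos
  · have := Real.pi_pos; positivity
  · exact Real.exp_pos _

lemma Gg_ne (ξ : E2) : Gg ξ ≠ 0 := (Gg_pos ξ).ne'

lemma hasFDerivAt_normSq (ξ : E2) :
    HasFDerivAt (fun x : E2 => ‖x‖ ^ 2) ((2:ℝ) • (innerSL ℝ ξ)) ξ := by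
  have h := (hasFDerivAt_id (𝕜 := ℝ) ξ).inner ℝ (hasFDerivAt_id ξ)
  have heq : (fun x : E2 => ‖x‖ ^ 2) = fun x : E2 => ⟪x, x⟫ := by
    ext x; rw [real_inner_self_eq_norm_sq]
  rw [heq]
  refine h.congr_fderiv ?_
  ext u
  simp [real_inner_comm, two_smul]

lemma hasGradientAt_Gg (ξ : E2) :
    HasGradientAt Gg ((-(1/2) * Gg ξ) • ξ) ξ := by
  rw [hasGradientAt_iff_hasFDerivAt]
  have h1 : HasFDerivAt (fun x : E2 => -‖x‖^2/4)
      ((-(1/4):ℝ) • ((2:ℝ) • (innerSL ℝ ξ))) ξ := by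
    have := (hasFDerivAt_normSq ξ).const_smul (-(1/4):ℝ)
    refine this.congr_of_eventuallyEq (Filter.Eventually.of_forall fun x => ?_)
    show -‖x‖^2/4 = -(1/4) * ‖x‖^2
    ring
  have h2 := (Real.hasDerivAt_exp (-‖ξ‖^2/4)).comp_hasFDerivAt ξ h1
  have h3 := h2.const_smul (1 / (4*π))
  have hfun : ((1/(4*π)) • Real.exp ∘ fun x : E2 => -‖x‖^2/4) = Gg := rfl
  rw [hfun] at h3
  refine h3.congr_fderiv ?_
  ext u
  simp [Gg, InnerProductSpace.toDual_apply_apply]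
  ring

lemma inner_gradient_Gg (ξ : E2) (u : E2) :
    ⟪u, gradient Gg ξ⟫ = (-(1/2) * Gg ξ) * ⟪u, ξ⟫ := by
  rw [(hasGradientAt_Gg ξ).gradient]
  rw [real_inner_smul_right]

def toE2 (p : ℝ × ℝ) : E2 := (EuclideanSpace.equiv (Fin 2) ℝ).symm ![p.1, p.2]

def mE : E2 ≃ᵐ ℝ × ℝ :=
  (MeasurableEquiv.toLp 2 (Fin 2 → ℝ)).symm.trans (MeasurableEquiv.finTwoArrow)

lemma mE_mp : MeasurePreserving mE :=
  (MeasureTheory.volume_preserving_finTwoArrow ℝ).comp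
    (EuclideanSpace.volume_preserving_symm_measurableEquiv_toLp (Fin 2))

lemma mE_symm_mp : MeasurePreserving mE.symm := mE_mp.symm mE

lemma mE_symm_eq (p : ℝ × ℝ) : mE.symm p = toE2 p := by
  apply PiLp.ext; intro i; fin_cases i <;> rfl

lemma toE2_apply_zero (p : ℝ × ℝ) : toE2 p 0 = p.1 := rfl
lemma toE2_apply_one (p : ℝ × ℝ) : toE2 p 1 = p.2 := rfl

lemma integral_toE2 (F : E2 → ℝ) : ∫ ξ, F ξ = ∫ p, F (toE2 p) := by
  rw [← mE_symm_mp.integral_comp mE.symm.measurableEmbedding F]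
  simp_rw [mE_symm_eq]

lemma integrable_toE2 {F : E2 → ℝ} (hF : Integrable F) :
    Integrable (fun p => F (toE2 p)) := by
  have := (mE_symm_mp.integrable_comp_emb mE.symm.measurableEmbedding (g := F)).2 hF
  have heq : (F ∘ mE.symm) = fun p => F (toE2 p) := by
    funext p; simp [Function.comp, mE_symm_eq]
  rwa [heq] at this

lemma integrable_of_toE2 {F : E2 → ℝ} (hF : Integrable (fun p => F (toE2 p))) :
    Integrable F := by
  apply (mE_symm_mp.integrable_comp_emb mE.symm.measurableEmbedding (g := F)).1
  have heq : (F ∘ mE.symm) = fun p => F (toE2 p) := by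
    funext p; simp [Function.comp, mE_symm_eq]
  rwa [heq]

/-- transfer of integrability to the polar target -/
lemma integrableOn_polar_target {F : E2 → ℝ} (hF : Integrable F) :
    IntegrableOn (fun p => p.1 * F (toE2 (polarCoord.symm p))) polarCoord.target := by
  have hs : MeasurableSet polarCoord.target := polarCoord.open_target.measurableSet
  have hinj : Set.InjOn polarCoord.symm polarCoord.target := polarCoord.symm.injOn
  have himg : polarCoord.symm '' polarCoord.target = polarCoord.source := by
    rw [← polarCoord.symm_source]
    exact polarCoord.symm.image_source_eq_target
  have h0 : IntegrableOn (fun p => F (toE2 p)) (polarCoord.symm '' polarCoord.target) := by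
    rw [himg]; exact (integrable_toE2 hF).integrableOn
  rw [integrableOn_image_iff_integrableOn_abs_det_fderiv_smul volume hs
    (fun p _ => (hasFDerivAt_polarCoord_symm p).hasFDerivWithinAt) hinj] at h0
  apply h0.congr_fun _ hs
  intro p hp
  have B_det : |(fderivPolarCoordSymm p).det| = p.1 := by
    have h1 : (fderivPolarCoordSymm p).det = p.1 := det_fderivPolarCoordSymm p
    rw [h1, abs_of_pos]
    rw [polarCoord_target] at hp
    exact hp.1
  simp only [B_det, smul_eq_mul]

/-- reverse transfer -/
lemma restrict_source : (volume : Measure (ℝ × ℝ)).restrict polarCoord.source = volume := by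
  rw [Measure.restrict_congr_set polarCoord_source_ae_eq_univ, Measure.restrict_univ]

lemma integrable_of_polar {F : E2 → ℝ} (hm : AEStronglyMeasurable F volume)
    (hF : IntegrableOn (fun p => p.1 * F (toE2 (polarCoord.symm p))) polarCoord.target) :
    Integrable F := by
  have hs : MeasurableSet polarCoord.target := polarCoord.open_target.measurableSet
  have hinj : Set.InjOn polarCoord.symm polarCoord.target := polarCoord.symm.injOn
  have himg : polarCoord.symm '' polarCoord.target = polarCoord.source := by
    rw [← polarCoord.symm_source]
    exact polarCoord.symm.image_source_eq_target
  apply integrable_of_toE2 (F := F)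
  have h0 : IntegrableOn (fun p => F (toE2 p)) (polarCoord.symm '' polarCoord.target) := by
    rw [integrableOn_image_iff_integrableOn_abs_det_fderiv_smul volume hs
      (fun p _ => (hasFDerivAt_polarCoord_symm p).hasFDerivWithinAt) hinj]
    apply hF.congr_fun _ hs
    intro p hp
    have h1 : (fderivPolarCoordSymm p).det = p.1 := det_fderivPolarCoordSymm p
    rw [polarCoord_target] at hp
    simp only [h1, smul_eq_mul, abs_of_pos (show (0:ℝ) < p.1 from hp.1)]
  rw [himg] at h0
  unfold IntegrableOn at h0
  rwa [restrict_source] at h0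


lemma polar_step {F : E2 → ℝ} (hF : Integrable F) :
    ∫ ξ, F ξ = ∫ r in Set.Ioi (0:ℝ), ∫ θ in Set.Ioo (-π) π,
      r * F (toE2 (r * cos θ, r * sin θ)) := by
  rw [integral_toE2 F, ← integral_comp_polarCoord_symm (fun p => F (toE2 p))]
  have hI : IntegrableOn (fun p => p.1 * F (toE2 (polarCoord.symm p))) polarCoord.target :=
    integrableOn_polar_target hF
  rw [polarCoord_target] at hI ⊢
  have hprod : (volume : Measure (ℝ × ℝ)).restrict (Set.Ioi (0:ℝ) ×ˢ Set.Ioo (-π) π)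
      = ((volume : Measure ℝ).restrict (Set.Ioi (0:ℝ))).prod
        ((volume : Measure ℝ).restrict (Set.Ioo (-π) π)) := by
    rw [Measure.prod_restrict, ← Measure.volume_eq_prod]
  have hsmul : (fun p : ℝ × ℝ => p.1 • F (toE2 (polarCoord.symm p)))
      = fun p : ℝ × ℝ => p.1 * F (toE2 (polarCoord.symm p)) := rfl
  rw [hsmul]
  unfold IntegrableOn at hI
  rw [hprod] at hI
  calc ∫ p in Set.Ioi (0:ℝ) ×ˢ Set.Ioo (-π) π, p.1 * F (toE2 (polarCoord.symm p))
      = ∫ p, p.1 * F (toE2 (polarCoord.symm p))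
          ∂(((volume : Measure ℝ).restrict (Set.Ioi (0:ℝ))).prod
            ((volume : Measure ℝ).restrict (Set.Ioo (-π) π))) := by rw [hprod]
    _ = ∫ r in Set.Ioi (0:ℝ), ∫ θ in Set.Ioo (-π) π,
          r * F (toE2 (polarCoord.symm (r, θ))) := MeasureTheory.integral_prod _ hI
    _ = _ := by simp_rw [polarCoord_symm_apply]


lemma grad_inner (w : SchwartzMap E2 ℝ) (ξ u : E2) :
    ⟪u, gradient (⇑w) ξ⟫ = fderiv ℝ (⇑w) ξ u := by
  have h := ((w.differentiable).differentiableAt).hasGradientAt (x := ξ)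
  rw [hasGradientAt_iff_hasFDerivAt] at h
  rw [h.fderiv, InnerProductSpace.toDual_apply_apply, real_inner_comm]

def toE2L : ℝ × ℝ →L[ℝ] E2 :=
  LinearMap.toContinuousLinearMap
  { toFun := toE2
    map_add' := fun p q => by
      apply PiLp.ext; intro i; fin_cases i <;> rfl
    map_smul' := fun c p => by
      apply PiLp.ext; intro i; fin_cases i <;> rfl }

lemma toE2L_eq (p : ℝ × ℝ) : toE2L p = toE2 p := rfl

lemma continuous_toE2 : Continuous toE2 := toE2L.continuous

lemma perp_toE2 (a b : ℝ) : perp (toE2 (a, b)) = toE2 (-b, a) := by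
  apply PiLp.ext; intro i; fin_cases i <;> rfl

lemma norm_toE2_polar (r θ : ℝ) : ‖toE2 (r * cos θ, r * sin θ)‖ ^ 2 = r ^ 2 := by
  rw [norm_sq_eq]
  show (r * cos θ) ^ 2 + (r * sin θ) ^ 2 = r ^ 2
  nlinarith [sin_sq_add_cos_sq θ]

lemma hasDerivAt_curve (r θ₀ : ℝ) :
    HasDerivAt (fun θ => toE2 (r * cos θ, r * sin θ))
      (perp (toE2 (r * cos θ₀, r * sin θ₀))) θ₀ := by
  have h1 : HasDerivAt (fun θ : ℝ => (r * cos θ, r * sin θ))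
      (r * -sin θ₀, r * cos θ₀) θ₀ :=
    (((Real.hasDerivAt_cos θ₀).const_mul r).prodMk ((Real.hasDerivAt_sin θ₀).const_mul r))
  have h2 := toE2L.hasFDerivAt.comp_hasDerivAt θ₀ h1
  have h3 : toE2L (r * -sin θ₀, r * cos θ₀) = perp (toE2 (r * cos θ₀, r * sin θ₀)) := by
    rw [perp_toE2, toE2L_eq]
    norm_num
  rw [h3] at h2
  exact h2

lemma inner_integral_zero (w : SchwartzMap E2 ℝ) (r : ℝ) :
    ∫ θ in Set.Ioo (-π) π,
      r * ((Gg (toE2 (r * cos θ, r * sin θ)))⁻¹ * w (toE2 (r * cos θ, r * sin θ)) *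
        ⟪vG (toE2 (r * cos θ, r * sin θ)), gradient (⇑w) (toE2 (r * cos θ, r * sin θ))⟫) = 0 := by
  set ξ : ℝ → E2 := fun θ => toE2 (r * cos θ, r * sin θ) with hξ
  set C0 : ℝ := r * ((1 / (4 * π)) * Real.exp (-r ^ 2 / 4))⁻¹ *
      ((2 * π * r ^ 2)⁻¹ * (1 - Real.exp (-r ^ 2 / 4))) with hC0
  set H' : ℝ → ℝ := fun θ => 2 * w (ξ θ) * (fderiv ℝ (⇑w) (ξ θ) (perp (ξ θ))) with hH'
  have hpt : ∀ θ, r * ((Gg (ξ θ))⁻¹ * w (ξ θ) * ⟪vG (ξ θ), gradient (⇑w) (ξ θ)⟫)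
      = (C0 / 2) * H' θ := by
    intro θ
    have hnorm : ‖ξ θ‖ ^ 2 = r ^ 2 := norm_toE2_polar r θ
    have hvG : vG (ξ θ) = ((2 * π * r ^ 2)⁻¹ * (1 - Real.exp (-r ^ 2 / 4))) • perp (ξ θ) := by
      rw [vG, hnorm]
    have hGg : Gg (ξ θ) = (1 / (4 * π)) * Real.exp (-r ^ 2 / 4) := by
      rw [Gg, hnorm]
    rw [hvG, hGg, real_inner_smul_left, grad_inner, hH', hC0]
    ring
  have hHd : ∀ θ, HasDerivAt (fun θ => w (ξ θ) * w (ξ θ)) (H' θ) θ := by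
    intro θ
    have hwd := (w.differentiable.differentiableAt (x := ξ θ)).hasFDerivAt
    have hc := hwd.comp_hasDerivAt θ (hasDerivAt_curve r θ)
    have := hc.mul hc
    refine this.congr_deriv ?_
    rw [hH']
    simp only [Function.comp_apply]
    ring
  have hcont : Continuous H' := by
    have hξc : Continuous ξ := by
      apply continuous_toE2.comp
      exact (continuous_const.mul continuous_cos).prodMk (continuous_const.mul continuous_sin)
    have hfc : Continuous fun θ => fderiv ℝ (⇑w) (ξ θ) :=
      ((w.smooth ⊤).continuous_fderiv (by simp)).comp hξc
    have hpc : Continuous fun θ => perp (ξ θ) := continuous_perp.comp hξc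
    exact ((continuous_const.mul ((w.continuous).comp hξc)).mul (hfc.clm_apply hpc))
  have hle : (-π : ℝ) ≤ π := by linarith [Real.pi_pos]
  calc ∫ θ in Set.Ioo (-π) π, r * ((Gg (ξ θ))⁻¹ * w (ξ θ) * ⟪vG (ξ θ), gradient (⇑w) (ξ θ)⟫)
      = ∫ θ in Set.Ioo (-π) π, (C0 / 2) * H' θ := by
        apply MeasureTheory.setIntegral_congr_fun measurableSet_Ioo
        intro θ _; exact hpt θ
    _ = ∫ θ in (-π)..π, (C0 / 2) * H' θ := by
        rw [intervalIntegral.integral_of_le hle, MeasureTheory.integral_Ioc_eq_integral_Ioo]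
    _ = (C0 / 2) * ∫ θ in (-π)..π, H' θ := intervalIntegral.integral_const_mul _ _
    _ = (C0 / 2) * (w (ξ π) * w (ξ π) - w (ξ (-π)) * w (ξ (-π))) := by
        rw [intervalIntegral.integral_eq_sub_of_hasDerivAt (fun θ _ => hHd θ)
          (hcont.intervalIntegrable _ _)]
    _ = 0 := by
        have : ξ π = ξ (-π) := by
          rw [hξ]
          norm_num [Real.cos_pi, Real.sin_pi]
        rw [this]; ring

lemma T1_zero (w : SchwartzMap E2 ℝ)
    (h : Integrable (fun ξ => (Gg ξ)⁻¹ * w ξ * ⟪vG ξ, gradient (⇑w) ξ⟫)) :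
    ∫ ξ, (Gg ξ)⁻¹ * w ξ * ⟪vG ξ, gradient (⇑w) ξ⟫ = 0 := by
  rw [polar_step h]
  rw [MeasureTheory.setIntegral_congr_fun measurableSet_Ioi
    (fun r _ => inner_integral_zero w r)]
  exact integral_zero _ _


/-! ### Step C : the Biot–Savart term -/

lemma sup_bound (w : SchwartzMap E2 ℝ) : ∃ M : ℝ, 0 ≤ M ∧ ∀ x : E2, |w x| ≤ M := by
  obtain ⟨C, hCpos, hC⟩ := w.decay 0 0
  refine ⟨C, hCpos.le, fun x => ?_⟩
  have := hC x
  simpa [Real.norm_eq_abs] using this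

lemma indicator_inv_integrable :
    Integrable ((Metric.ball (0:E2) 1).indicator (fun z => ‖z‖⁻¹)) := by
  apply integrable_of_polar
  · exact ((measurable_norm.inv).indicator measurableSet_ball).aestronglyMeasurable
  · have hmeas : MeasurableSet (Set.Ioo (0:ℝ) 1 ×ˢ Set.Ioo (-π) π) :=
      measurableSet_Ioo.prod measurableSet_Ioo
    have hfin : (volume (Set.Ioo (0:ℝ) 1 ×ˢ Set.Ioo (-π) π)) < ⊤ := by
      rw [Measure.volume_eq_prod, Measure.prod_prod, Real.volume_Ioo, Real.volume_Ioo]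
      exact ENNReal.mul_lt_top ENNReal.ofReal_lt_top ENNReal.ofReal_lt_top
    have hind : Integrable ((Set.Ioo (0:ℝ) 1 ×ˢ Set.Ioo (-π) π).indicator
        (fun _ : ℝ × ℝ => (1:ℝ))) := by
      rw [integrable_indicator_iff hmeas]
      exact integrableOn_const hfin.ne
    apply (hind.integrableOn).congr_fun _ polarCoord.open_target.measurableSet
    intro p hp
    rw [polarCoord_target] at hp
    obtain ⟨hp1, hp2⟩ := hp
    have hp1' : (0:ℝ) < p.1 := hp1
    have hnorm : ‖toE2 (p.1 * cos p.2, p.1 * sin p.2)‖ = p.1 := by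
      have h2 := norm_toE2_polar p.1 p.2
      nlinarith [norm_nonneg (toE2 (p.1 * cos p.2, p.1 * sin p.2)), hp1'.le]
    show (Set.Ioo (0:ℝ) 1 ×ˢ Set.Ioo (-π) π).indicator (fun _ => (1:ℝ)) p
      = p.1 * (Metric.ball (0:E2) 1).indicator (fun z => ‖z‖⁻¹) (toE2 (polarCoord.symm p))
    rw [polarCoord_symm_apply]
    by_cases hlt : p.1 < 1
    · have hmem : toE2 (p.1 * cos p.2, p.1 * sin p.2) ∈ Metric.ball (0:E2) 1 := by
        rw [Metric.mem_ball, dist_zero_right, hnorm]; exact hlt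
      have hmem' : p ∈ Set.Ioo (0:ℝ) 1 ×ˢ Set.Ioo (-π) π := ⟨⟨hp1', hlt⟩, hp2⟩
      rw [Set.indicator_of_mem hmem, Set.indicator_of_mem hmem', hnorm,
        mul_inv_cancel₀ hp1'.ne']
    · have hmem : toE2 (p.1 * cos p.2, p.1 * sin p.2) ∉ Metric.ball (0:E2) 1 := by
        rw [Metric.mem_ball, dist_zero_right, hnorm]; exact hlt
      have hmem' : p ∉ Set.Ioo (0:ℝ) 1 ×ˢ Set.Ioo (-π) π := by
        intro h; exact hlt h.1.2
      rw [Set.indicator_of_notMem hmem, Set.indicator_of_notMem hmem', mul_zero]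

lemma exists_conv_bound (w : SchwartzMap E2 ℝ) : ∃ C : ℝ, ∀ ξ : E2,
    Integrable (fun η => |w η| * ‖ξ - η‖⁻¹) ∧ (∫ η, |w η| * ‖ξ - η‖⁻¹) ≤ C := by
  obtain ⟨M, hM0, hM⟩ := sup_bound w
  set I0 : ℝ := ∫ z : E2, (Metric.ball (0:E2) 1).indicator (fun z => ‖z‖⁻¹) z with hI0
  set W : ℝ := ∫ η : E2, |w η| with hW
  refine ⟨M * I0 + W, fun ξ => ?_⟩
  have hmp : MeasurePreserving (fun η : E2 => ξ - η) volume volume :=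
    Measure.measurePreserving_sub_left volume ξ
  have hemb : MeasurableEmbedding (fun η : E2 => ξ - η) :=
    (MeasurableEquiv.subLeft ξ).measurableEmbedding
  -- dominator
  set D : E2 → ℝ := fun z => M * (Metric.ball (0:E2) 1).indicator (fun z => ‖z‖⁻¹) z
      + |w (ξ - z)| with hD
  have hwint : Integrable (fun z : E2 => |w (ξ - z)|) := by
    have : Integrable (fun η : E2 => |w η|) := (w.integrable).abs
    exact (hmp.integrable_comp_emb hemb).2 this
  have hDint : Integrable D :=
    (indicator_inv_integrable.const_mul M).add hwint
  have hg : ∀ z : E2, |w (ξ - z)| * ‖z‖⁻¹ ≤ D z := by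
    intro z
    simp only [hD]
    by_cases hz : z ∈ Metric.ball (0:E2) 1
    · rw [Set.indicator_of_mem hz]
      have h1 : |w (ξ - z)| * ‖z‖⁻¹ ≤ M * ‖z‖⁻¹ :=
        mul_le_mul_of_nonneg_right (hM _) (by positivity)
      nlinarith [abs_nonneg (w (ξ - z))]
    · rw [Set.indicator_of_notMem hz]
      have h1 : (1:ℝ) ≤ ‖z‖ := by
        rw [Metric.mem_ball, dist_zero_right] at hz; linarith [not_lt.1 hz]
      have h2 : ‖z‖⁻¹ ≤ 1 := by
        rw [inv_le_one_iff₀]; right; exact h1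
      nlinarith [abs_nonneg (w (ξ - z)), inv_nonneg.2 (norm_nonneg z)]
  have hgm : AEStronglyMeasurable (fun z : E2 => |w (ξ - z)| * ‖z‖⁻¹) volume := by
    apply Measurable.aestronglyMeasurable
    exact ((w.continuous.measurable.comp (measurable_const.sub measurable_id)).abs).mul
      measurable_norm.inv
  have hgint : Integrable (fun z : E2 => |w (ξ - z)| * ‖z‖⁻¹) := by
    apply hDint.mono' hgm
    refine Filter.Eventually.of_forall fun z => ?_
    rw [Real.norm_eq_abs, abs_of_nonneg (by positivity)]
    exact hg z
  have hcomp : (fun η : E2 => |w η| * ‖ξ - η‖⁻¹)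
      = (fun z : E2 => |w (ξ - z)| * ‖z‖⁻¹) ∘ (fun η => ξ - η) := by
    funext η; simp [Function.comp, sub_sub_cancel]
  constructor
  · rw [hcomp]
    exact (hmp.integrable_comp_emb hemb).2 hgint
  · have h1 : (∫ η, |w η| * ‖ξ - η‖⁻¹) = ∫ z, |w (ξ - z)| * ‖z‖⁻¹ := by
      rw [hcomp]
      exact hmp.integral_comp hemb (fun z : E2 => |w (ξ - z)| * ‖z‖⁻¹)
    rw [h1]
    have h2 : (∫ z, |w (ξ - z)| * ‖z‖⁻¹) ≤ ∫ z, D z :=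
      integral_mono hgint hDint hg
    have h3 : (∫ z, D z) = M * I0 + W := by
      rw [hD, integral_add (indicator_inv_integrable.const_mul M) hwint,
        integral_const_mul]
      congr 1
      rw [hW]
      exact hmp.integral_comp hemb (fun η : E2 => |w η|)
    linarith


def Qf (w : SchwartzMap E2 ℝ) : E2 × E2 → ℝ := fun z =>
  w z.1 * ((w z.2 / ‖z.1 - z.2‖ ^ 2) * ⟪perp (z.1 - z.2), z.1⟫)

lemma inner_perp_eq (ξ η : E2) : ⟪perp (ξ - η), ξ⟫ = ⟪perp (ξ - η), η⟫ := by
  have h := inner_perp_self (ξ - η)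
  rw [inner_sub_right] at h
  linarith

lemma Qf_skew (w : SchwartzMap E2 ℝ) (ξ η : E2) : Qf w (η, ξ) = - Qf w (ξ, η) := by
  unfold Qf
  simp only
  rw [norm_sub_rev η ξ, show η - ξ = -(ξ - η) by abel, perp_neg, inner_neg_left,
    inner_perp_eq ξ η]
  ring

lemma Qf_meas (w : SchwartzMap E2 ℝ) : Measurable (Qf w) := by
  have hcont1 : Continuous fun z : E2 × E2 => ⟪perp (z.1 - z.2), z.1⟫ :=
    continuous_inner.comp ((continuous_perp.comp (continuous_fst.sub continuous_snd)).prodMk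
      continuous_fst)
  exact ((w.continuous.comp continuous_fst).measurable).mul
    ((((w.continuous.comp continuous_snd).measurable).div
      (((continuous_fst.sub continuous_snd).norm.pow 2).measurable)).mul hcont1.measurable)

lemma Qf_bound (w : SchwartzMap E2 ℝ) (ξ η : E2) :
    ‖Qf w (ξ, η)‖ ≤ (|w ξ| * ‖ξ‖) * (|w η| * ‖ξ - η‖⁻¹) := by
  unfold Qf
  simp only
  rw [Real.norm_eq_abs]
  by_cases hz : ξ - η = 0
  · rw [hz]
    simp
  · have hz0 : (0:ℝ) < ‖ξ - η‖ := norm_pos_iff.2 hz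
    have hI : |⟪perp (ξ - η), ξ⟫| ≤ ‖ξ - η‖ * ‖ξ‖ := by
      have := abs_real_inner_le_norm (perp (ξ - η)) ξ
      rwa [norm_perp] at this
    rw [abs_mul, abs_mul, abs_div, abs_of_nonneg (by positivity : (0:ℝ) ≤ ‖ξ - η‖ ^ 2)]
    calc |w ξ| * (|w η| / ‖ξ - η‖ ^ 2 * |⟪perp (ξ - η), ξ⟫|)
        ≤ |w ξ| * (|w η| / ‖ξ - η‖ ^ 2 * (‖ξ - η‖ * ‖ξ‖)) := by
          gcongr
      _ = (|w ξ| * ‖ξ‖) * (|w η| * ‖ξ - η‖⁻¹) := by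
          field_simp


lemma Qf_integrable (w : SchwartzMap E2 ℝ) :
    Integrable (Qf w) ((volume : Measure E2).prod volume) := by
  obtain ⟨C, hC⟩ := exists_conv_bound w
  have hQm : AEStronglyMeasurable (Qf w) ((volume : Measure E2).prod volume) :=
    (Qf_meas w).aestronglyMeasurable
  rw [integrable_prod_iff hQm]
  constructor
  · refine Filter.Eventually.of_forall fun ξ => ?_
    apply ((hC ξ).1.const_mul (|w ξ| * ‖ξ‖)).mono'
      ((Qf_meas w).comp (measurable_const.prodMk measurable_id)).aestronglyMeasurable
    refine Filter.Eventually.of_forall fun η => ?_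
    exact Qf_bound w ξ η
  · have hmes : AEStronglyMeasurable (fun ξ => ∫ η, ‖Qf w (ξ, η)‖) volume :=
      hQm.norm.integral_prod_right'
    apply Integrable.mono' (g := fun ξ => C * (‖ξ‖ ^ 1 * ‖w ξ‖)) _ hmes
    · refine Filter.Eventually.of_forall fun ξ => ?_
      rw [Real.norm_eq_abs, abs_of_nonneg (integral_nonneg fun η => norm_nonneg _)]
      have h1 : (∫ η, ‖Qf w (ξ, η)‖) ≤ ∫ η, (|w ξ| * ‖ξ‖) * (|w η| * ‖ξ - η‖⁻¹) := by
        apply integral_mono _ ((hC ξ).1.const_mul (|w ξ| * ‖ξ‖))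
          (fun η => Qf_bound w ξ η)
        · constructor
          · exact ((Qf_meas w).comp
              (measurable_const.prodMk measurable_id)).norm.aestronglyMeasurable
          · rw [hasFiniteIntegral_norm_iff]
            exact (((hC ξ).1.const_mul (|w ξ| * ‖ξ‖)).mono'
              ((Qf_meas w).comp
                (measurable_const.prodMk measurable_id)).aestronglyMeasurable
              (Filter.Eventually.of_forall fun η => Qf_bound w ξ η)).2
      have h2 : (∫ η, (|w ξ| * ‖ξ‖) * (|w η| * ‖ξ - η‖⁻¹))
          = (|w ξ| * ‖ξ‖) * ∫ η, |w η| * ‖ξ - η‖⁻¹ := integral_const_mul _ _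
      have h3 : (|w ξ| * ‖ξ‖) * (∫ η, |w η| * ‖ξ - η‖⁻¹) ≤ (|w ξ| * ‖ξ‖) * C :=
        mul_le_mul_of_nonneg_left (hC ξ).2 (by positivity)
      calc (∫ η, ‖Qf w (ξ, η)‖) ≤ (|w ξ| * ‖ξ‖) * C := by
            rw [h2] at h1; linarith
        _ = C * (‖ξ‖ ^ 1 * ‖w ξ‖) := by rw [Real.norm_eq_abs]; ring
    · exact (w.integrable_pow_mul volume 1).const_mul C

lemma Qf_integral_zero (w : SchwartzMap E2 ℝ) :
    ∫ z, Qf w z ∂((volume : Measure E2).prod volume) = 0 := by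
  have hswap : ∫ z : E2 × E2, Qf w z.swap ∂((volume : Measure E2).prod volume)
      = ∫ z, Qf w z ∂((volume : Measure E2).prod volume) :=
    MeasureTheory.integral_prod_swap (Qf w)
  have hskew : ∀ z : E2 × E2, Qf w z.swap = - Qf w z := by
    intro z
    have := Qf_skew w z.1 z.2
    exact this
  simp_rw [hskew, integral_neg] at hswap
  linarith

lemma T2_props (w : SchwartzMap E2 ℝ) (v : E2 → E2)
    (hv : ∀ ξ, v ξ = (2 * π)⁻¹ • ∫ η, (w η / ‖ξ - η‖ ^ 2) • perp (ξ - η)) :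
    Integrable (fun ξ => -(1/2) * (w ξ * ⟪v ξ, ξ⟫)) ∧
      ∫ ξ, -(1/2) * (w ξ * ⟪v ξ, ξ⟫) = 0 := by
  obtain ⟨C, hC⟩ := exists_conv_bound w
  have hker : ∀ ξ : E2, Integrable (fun η => (w η / ‖ξ - η‖ ^ 2) • perp (ξ - η)) := by
    intro ξ
    apply ((hC ξ).1).mono'
    · apply Measurable.aestronglyMeasurable
      apply Measurable.smul (f := fun η => w η / ‖ξ - η‖ ^ 2) (g := fun η => perp (ξ - η))
      · exact (w.continuous.measurable).div
          (((continuous_const.sub continuous_id).norm.pow 2).measurable)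
      · exact (continuous_perp.comp (continuous_const.sub continuous_id)).measurable
    · refine Filter.Eventually.of_forall fun η => ?_
      rw [norm_smul, Real.norm_eq_abs]
      by_cases hz : ξ - η = 0
      · rw [hz]
        simp
      · have hz0 : (0:ℝ) < ‖ξ - η‖ := norm_pos_iff.2 hz
        rw [norm_perp, abs_div, abs_of_nonneg (by positivity : (0:ℝ) ≤ ‖ξ - η‖ ^ 2)]
        have heq : |w η| / ‖ξ - η‖ ^ 2 * ‖ξ - η‖ = |w η| * ‖ξ - η‖⁻¹ := by
          field_simp
        exact le_of_eq heq
  have hT2eq : ∀ ξ : E2, -(1/2) * (w ξ * ⟪v ξ, ξ⟫) = -(4*π)⁻¹ * ∫ η, Qf w (ξ, η) := by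
    intro ξ
    rw [hv ξ, real_inner_smul_left]
    have hii := integral_inner (𝕜 := ℝ) (hker ξ) ξ
    have h1 : ⟪(∫ η, (w η / ‖ξ - η‖ ^ 2) • perp (ξ - η)), ξ⟫
        = ∫ η, (w η / ‖ξ - η‖ ^ 2) * ⟪perp (ξ - η), ξ⟫ := by
      rw [real_inner_comm, ← hii]
      congr 1
      funext η
      rw [real_inner_smul_right, real_inner_comm]
    rw [h1]
    calc -(1/2) * (w ξ * ((2 * π)⁻¹ *
          ∫ η, (w η / ‖ξ - η‖ ^ 2) * ⟪perp (ξ - η), ξ⟫))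
        = -(4*π)⁻¹ * (w ξ * ∫ η, (w η / ‖ξ - η‖ ^ 2) * ⟪perp (ξ - η), ξ⟫) := by ring
      _ = -(4*π)⁻¹ * ∫ η, w ξ * ((w η / ‖ξ - η‖ ^ 2) * ⟪perp (ξ - η), ξ⟫) := by
          rw [integral_const_mul]
      _ = -(4*π)⁻¹ * ∫ η, Qf w (ξ, η) := rfl
  constructor
  · apply (((Qf_integrable w).integral_prod_left).const_mul (-(4*π)⁻¹)).congr
    refine Filter.Eventually.of_forall fun ξ => ?_
    exact (hT2eq ξ).symm
  · calc ∫ ξ, -(1/2) * (w ξ * ⟪v ξ, ξ⟫)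
        = ∫ ξ, -(4*π)⁻¹ * ∫ η, Qf w (ξ, η) := by
          congr 1; funext ξ; exact hT2eq ξ
      _ = -(4*π)⁻¹ * ∫ ξ, ∫ η, Qf w (ξ, η) := integral_const_mul _ _
      _ = -(4*π)⁻¹ * ∫ z, Qf w z ∂((volume : Measure E2).prod volume) := by
          rw [MeasureTheory.integral_prod _ (Qf_integrable w)]
      _ = 0 := by rw [Qf_integral_zero w]; ring


/-- skew-symmetry of `Λ` on `L²_w(ℝ²)`: for sufficiently regular
(here: Schwartz) `w̃` with `G^{−1/2} w̃ ∈ L²` and `ṽ = K_{BS} ⋆ w̃`, with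
`Λw̃ = v^G·∇w̃ + ṽ·∇G`, one has `∫ G^{−1} w̃ (Λw̃) = 0`. -/
theorem stmt15 (w : SchwartzMap E2 ℝ) (v : E2 → E2)
    (hw : MemLp (fun ξ => Gg ξ ^ (-(1 : ℝ) / 2) * w ξ) 2 volume)
    (hv : ∀ ξ, v ξ = (2 * π)⁻¹ • ∫ η, (w η / ‖ξ - η‖ ^ 2) • perp (ξ - η)) :
    ∫ ξ, (Gg ξ)⁻¹ * w ξ *
      (⟪vG ξ, gradient (⇑w) ξ⟫ + ⟪v ξ, gradient Gg ξ⟫) = 0 := by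
  have hsplit : ∀ ξ : E2, (Gg ξ)⁻¹ * w ξ *
      (⟪vG ξ, gradient (⇑w) ξ⟫ + ⟪v ξ, gradient Gg ξ⟫)
      = ((Gg ξ)⁻¹ * w ξ * ⟪vG ξ, gradient (⇑w) ξ⟫) + (-(1/2) * (w ξ * ⟪v ξ, ξ⟫)) := by
    intro ξ
    rw [inner_gradient_Gg ξ (v ξ)]
    have hne := Gg_ne ξ
    field_simp
  simp_rw [hsplit]
  by_cases hInt : Integrable (fun ξ : E2 =>
      ((Gg ξ)⁻¹ * w ξ * ⟪vG ξ, gradient (⇑w) ξ⟫) + (-(1/2) * (w ξ * ⟪v ξ, ξ⟫)))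
  · obtain ⟨hT2i, hT2z⟩ := T2_props w v hv
    have hT1i : Integrable (fun ξ : E2 => (Gg ξ)⁻¹ * w ξ * ⟪vG ξ, gradient (⇑w) ξ⟫) := by
      apply (hInt.sub hT2i).congr
      refine Filter.Eventually.of_forall fun ξ => ?_
      simp only [Pi.sub_apply]
      ring
    rw [integral_add hT1i hT2i, T1_zero w hT1i, hT2z, add_zero]
  · rw [integral_undef hInt]

end
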